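/- Let X be a finite-dimensional real Hilbert space and f : X → ℝ convex and differentiable with inf f < 0. Then for every ρ > 0, inf{‖∇f(x)‖ : ‖x‖ ≤ ρ and f(x) > 0} > 0. -/

import Mathlib

open InnerProductSpace

lemma grad_ineq {X : Type*} [NormedAddCommGroup X] [InnerProductSpace ℝ X] [CompleteSpace X]
    (f : X → ℝ) (hconv : ConvexOn ℝ Set.univ f)
    {x g : X} (hg : HasGradientAt f g x) (y : X) :
    f x + inner ℝ g (y - x) ≤ f y := by
  set c : ℝ →ᵃ[ℝ] X := AffineMap.lineMap x y with hc
  have hcomp : ConvexOn ℝ Set.univ (f ∘ c) := by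
    have := hconv.comp_affineMap c
    simpa using this
  have hd : HasDerivAt (f ∘ c) (inner ℝ g (y - x) : ℝ) 0 := by
    have hc0 : HasDerivAt (fun t : ℝ => c t) (y - x) 0 := by
      have : HasDerivAt (fun t : ℝ => t • (y - x) + x) ((1 : ℝ) • (y - x)) 0 := by
        exact ((hasDerivAt_id 0).smul_const (y - x)).add_const x
      simpa [hc, AffineMap.lineMap_apply, one_smul] using this
    have hx0 : c 0 = x := by simp [hc]
    have hg' : HasFDerivAt f ((toDual ℝ X) g) (c 0) := hx0 ▸ hg.hasFDerivAt
    have := hg'.comp_hasDerivAt (x := (0 : ℝ)) hc0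
    simpa using this
  have hslope := hcomp.le_slope_of_hasDerivAt (x := (0:ℝ)) (y := (1:ℝ))
    (Set.mem_univ _) (Set.mem_univ _) one_pos hd
  have h0 : c 0 = x := by simp [hc]
  have h1 : c 1 = y := by simp [hc]
  simp [slope, h0, h1, Function.comp] at hslope
  linarith

theorem gradient_bounded_below
    {X : Type*} [NormedAddCommGroup X] [InnerProductSpace ℝ X]
    [FiniteDimensional ℝ X]
    (f : X → ℝ) (hconv : ConvexOn ℝ Set.univ f)
    (f' : X → X) (hf' : ∀ x : X, HasGradientAt f (f' x) x)
    (hinf : ∃ x, f x < 0) :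
    ∀ ρ : ℝ, 0 < ρ →
      ∃ α : ℝ, 0 < α ∧ ∀ x : X, ‖x‖ ≤ ρ → 0 < f x → α ≤ ‖f' x‖ := by
  obtain ⟨y, hy⟩ := hinf
  intro ρ hρ
  have hden : 0 < ‖y‖ + ρ := by positivity
  refine ⟨(-f y) / (‖y‖ + ρ), div_pos (by linarith) hden, ?_⟩
  intro x hx hfx
  have key := grad_ineq f hconv (hf' x) y
  have h1 : -f y ≤ -(inner ℝ (f' x) (y - x) : ℝ) := by linarith
  have h2 : -(inner ℝ (f' x) (y - x) : ℝ) ≤ ‖f' x‖ * ‖y - x‖ := by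
    have := abs_real_inner_le_norm (f' x) (y - x)
    have := neg_abs_le (inner ℝ (f' x) (y - x) : ℝ)
    linarith
  have h3 : ‖y - x‖ ≤ ‖y‖ + ρ := le_trans (norm_sub_le _ _) (by linarith)
  have h4 : ‖f' x‖ * ‖y - x‖ ≤ ‖f' x‖ * (‖y‖ + ρ) :=
    mul_le_mul_of_nonneg_left h3 (norm_nonneg _)
  rw [div_le_iff₀ hden]
  linarith
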